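/- With dea as defined (dea a 0 c = none; dea a b c = some ((c-a)/b) if b ∣ (c-a); else dea a b c = Option.map (fun y => (c - y·a)/b) (dea b (a % b) c)): if b ≠ 0 and dea a b c = none, then gcd(a, b) does not divide c. -/

import Mathlib

def dea (a b : ℕ) (c : ℤ) : Option ℤ :=
  if h : b = 0 then none
  else if (b : ℤ) ∣ (c - a) then some ((c - (a : ℤ)) / b)
  else Option.map (fun y => (c - y * a) / b) (dea b (a % b) c)
termination_by b
decreasing_by exact Nat.mod_lt a (Nat.pos_of_ne_zero h)


theorem stmt_5 (a b : ℕ) (c : ℤ) (hb : b ≠ 0) (h : dea a b c = none) :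
    ¬ ((Nat.gcd a b : ℤ) ∣ c) := by
  induction b using Nat.strong_induction_on generalizing a with
  | _ b ih =>
  rw [dea] at h
  rw [dif_neg hb] at h
  by_cases hdvd : (b : ℤ) ∣ (c - a)
  · rw [if_pos hdvd] at h; exact absurd h (by simp)
  · rw [if_neg hdvd] at h
    rw [Option.map_eq_none_iff] at h
    have hgcd : Nat.gcd a b = Nat.gcd b (a % b) := by
      rw [Nat.gcd_comm a b, Nat.gcd_rec b a, Nat.gcd_comm]
    rw [hgcd]
    by_cases hm : a % b = 0
    · -- then b ∣ a, gcd b 0 = b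
      rw [hm, Nat.gcd_zero_right]
      intro hbc
      apply hdvd
      have hba : (b : ℤ) ∣ (a : ℤ) := by
        exact_mod_cast Int.natCast_dvd_natCast.mpr (Nat.dvd_of_mod_eq_zero hm)
      exact dvd_sub hbc hba
    · exact ih (a % b) (Nat.mod_lt a (Nat.pos_of_ne_zero hb)) b hm h
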